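/- Let J ⊆ ℝ be a nonempty open interval on which r·1 − b is invertible, and let M : ℝ → Matrix (Fin m) (Fin m) ℝ be differentiable on J with M'(r) = −( M(r)·ρ(r) + ρ(r)ᵀ·M(r) ) for all r ∈ J. Then there exists a constant m×m real matrix c such that M(r) = ρ(r)ᵀ · c · ρ(r) for all r ∈ J. Equivalently, the function r ↦ (ρ(r)ᵀ)⁻¹ · M(r) · ρ(r)⁻¹ is constant on J. -/

import Mathlib

open Matrix

/-- **Integration of the Bianchi equation for the b.w. 0 Weyl components.**
With `ρ(r) = (r·1 - b)⁻¹` on a nonempty open interval `J` where `r·1 - b` is invertible,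
any matrix solution of `M' = -(M·ρ + ρᵀ·M)` has the form `M(r) = ρ(r)ᵀ · c · ρ(r)`
for a constant matrix `c`. -/
theorem integrated_bianchi_bw0
    (m : ℕ) (hm : 1 ≤ m) (b : Matrix (Fin m) (Fin m) ℝ)
    (J : Set ℝ) (hJopen : IsOpen J) (hJconn : J.OrdConnected) (hJne : J.Nonempty)
    (hinv : ∀ r ∈ J, IsUnit (r • (1 : Matrix (Fin m) (Fin m) ℝ) - b))
    (M : ℝ → Matrix (Fin m) (Fin m) ℝ)
    (hder : ∀ r ∈ J, ∀ i j, HasDerivAt (fun s => M s i j)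
      ((-(M r * (r • (1 : Matrix (Fin m) (Fin m) ℝ) - b)⁻¹
          + ((r • (1 : Matrix (Fin m) (Fin m) ℝ) - b)⁻¹)ᵀ * M r)) i j) r) :
    ∃ c : Matrix (Fin m) (Fin m) ℝ, ∀ r ∈ J,
      M r = ((r • (1 : Matrix (Fin m) (Fin m) ℝ) - b)⁻¹)ᵀ * c
              * (r • (1 : Matrix (Fin m) (Fin m) ℝ) - b)⁻¹ := by
  classical
  set A : ℝ → Matrix (Fin m) (Fin m) ℝ := fun r => r • 1 - b with hAdef
  set N : ℝ → Matrix (Fin m) (Fin m) ℝ := fun r => (A r)ᵀ * M r * A r with hNdef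
  obtain ⟨r₀, hr₀⟩ := hJne
  have hdet : ∀ r ∈ J, IsUnit (A r).det := fun r hr =>
    (isUnit_iff_isUnit_det _).mp (hinv r hr)
  -- entrywise derivative of A
  have hAder : ∀ (r : ℝ) (k i : Fin m), HasDerivAt (fun s => A s k i)
      ((1 : Matrix (Fin m) (Fin m) ℝ) k i) r := by
    intro r k i
    have heq : (fun s => A s k i) = fun s => s * (1 : Matrix (Fin m) (Fin m) ℝ) k i - b k i := by
      funext s
      simp [hAdef, Matrix.sub_apply, Matrix.smul_apply, smul_eq_mul]
    rw [heq]
    simpa using ((hasDerivAt_id r).mul_const ((1 : Matrix (Fin m) (Fin m) ℝ) k i)).sub_const (b k i)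
  -- N has zero derivative entrywise on J
  have hNder : ∀ r ∈ J, ∀ i j, HasDerivAt (fun s => N s i j) 0 r := by
    intro r hr i j
    set D : Matrix (Fin m) (Fin m) ℝ :=
      -(M r * (A r)⁻¹ + ((A r)⁻¹)ᵀ * M r) with hDdef
    have h1 : (A r)⁻¹ * A r = 1 := Matrix.nonsing_inv_mul _ (hdet r hr)
    have h2 : (A r)ᵀ * ((A r)⁻¹)ᵀ = 1 := by
      rw [← Matrix.transpose_mul, h1, Matrix.transpose_one]
    have h0 : M r * A r + (A r)ᵀ * D * A r + (A r)ᵀ * M r = 0 := by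
      have e1 : (A r)ᵀ * (M r * (A r)⁻¹) * A r = (A r)ᵀ * M r := by
        rw [mul_assoc, mul_assoc, h1, mul_one]
      have e2 : (A r)ᵀ * (((A r)⁻¹)ᵀ * M r) * A r = M r * A r := by
        rw [← mul_assoc, h2, one_mul]
      rw [hDdef]
      rw [mul_neg, neg_mul, mul_add, add_mul, e1, e2]
      abel
    have hsum : HasDerivAt
        (fun s => ∑ l : Fin m, ∑ k : Fin m, A s k i * (M s k l * A s l j))
        (∑ l : Fin m, ∑ k : Fin m,
          ((1 : Matrix (Fin m) (Fin m) ℝ) k i * (M r k l * A r l j)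
            + A r k i * (D k l * A r l j + M r k l * (1 : Matrix (Fin m) (Fin m) ℝ) l j))) r := by
      refine HasDerivAt.fun_sum fun l _ => HasDerivAt.fun_sum fun k _ => ?_
      exact (hAder r k i).mul ((hder r hr k l).mul (hAder r l j))
    have hfun : (fun s => N s i j)
        = fun s => ∑ l : Fin m, ∑ k : Fin m, A s k i * (M s k l * A s l j) := by
      funext s
      simp only [hNdef, Matrix.mul_apply, Matrix.transpose_apply, Finset.sum_mul, mul_assoc,
        Finset.mul_sum]
      exact Finset.sum_comm
    have t1 : (∑ l : Fin m, ∑ k : Fin m,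
          (1 : Matrix (Fin m) (Fin m) ℝ) k i * (M r k l * A r l j)) = (M r * A r) i j := by
      rw [Matrix.mul_apply]
      refine Finset.sum_congr rfl fun l _ => ?_
      simp [Matrix.one_apply]
    have t2 : (∑ l : Fin m, ∑ k : Fin m, A r k i * (D k l * A r l j))
        = ((A r)ᵀ * D * A r) i j := by
      simp only [Matrix.mul_apply, Matrix.transpose_apply, Finset.sum_mul, mul_assoc,
        Finset.mul_sum]
    have t3 : (∑ l : Fin m, ∑ k : Fin m,
          A r k i * (M r k l * (1 : Matrix (Fin m) (Fin m) ℝ) l j))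
        = ((A r)ᵀ * M r) i j := by
      have e : ∀ l, (∑ k : Fin m, A r k i * (M r k l * (1 : Matrix (Fin m) (Fin m) ℝ) l j))
          = ((A r)ᵀ * M r) i l * (1 : Matrix (Fin m) (Fin m) ℝ) l j := by
        intro l
        simp [Matrix.mul_apply, Matrix.transpose_apply, Finset.sum_mul, mul_assoc]
      calc (∑ l : Fin m, ∑ k : Fin m,
              A r k i * (M r k l * (1 : Matrix (Fin m) (Fin m) ℝ) l j))
          = ∑ l : Fin m, ((A r)ᵀ * M r) i l * (1 : Matrix (Fin m) (Fin m) ℝ) l j :=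
            Finset.sum_congr rfl fun l _ => e l
        _ = ((A r)ᵀ * M r * (1 : Matrix (Fin m) (Fin m) ℝ)) i j := by rw [Matrix.mul_apply]
        _ = ((A r)ᵀ * M r) i j := by rw [mul_one]
    have hval : (∑ l : Fin m, ∑ k : Fin m,
          ((1 : Matrix (Fin m) (Fin m) ℝ) k i * (M r k l * A r l j)
            + A r k i * (D k l * A r l j + M r k l * (1 : Matrix (Fin m) (Fin m) ℝ) l j)))
        = (M r * A r + (A r)ᵀ * D * A r + (A r)ᵀ * M r) i j := by
      simp only [mul_add, Finset.sum_add_distrib, Matrix.add_apply]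
      rw [t1, t2, t3]
      ring
    rw [hfun]
    have := hsum
    rw [hval, h0] at this
    simpa using this
  have hconv : Convex ℝ J := convex_iff_ordConnected.mpr hJconn
  have hconst : ∀ r ∈ J, N r = N r₀ := by
    intro r hr
    ext i j
    have hdiff : DifferentiableOn ℝ (fun s => N s i j) J := fun x hx =>
      ((hNder x hx i j).differentiableAt).differentiableWithinAt
    have hfz : ∀ x ∈ J, fderivWithin ℝ (fun s => N s i j) J x = 0 := by
      intro x hx
      rw [fderivWithin_of_isOpen hJopen hx, (hNder x hx i j).hasFDerivAt.fderiv]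
      ext
      simp
    exact hconv.is_const_of_fderivWithin_eq_zero hdiff hfz hr hr₀
  refine ⟨N r₀, fun r hr => ?_⟩
  have h1 : A r * (A r)⁻¹ = 1 := Matrix.mul_nonsing_inv _ (hdet r hr)
  have h2 : ((A r)⁻¹)ᵀ * (A r)ᵀ = 1 := by
    rw [← Matrix.transpose_mul, h1, Matrix.transpose_one]
  have key : ((A r)⁻¹)ᵀ * N r * (A r)⁻¹ = M r := by
    rw [hNdef]
    calc ((A r)⁻¹)ᵀ * ((A r)ᵀ * M r * A r) * (A r)⁻¹
        = (((A r)⁻¹)ᵀ * (A r)ᵀ) * M r * (A r * (A r)⁻¹) := by noncomm_ring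
      _ = M r := by rw [h1, h2, one_mul, mul_one]
  show M r = ((A r)⁻¹)ᵀ * N r₀ * (A r)⁻¹
  rw [← hconst r hr, key]
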